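/- Degree bounds from an eigenvaluation at infinity. Let K be an algebraically closed field of characteristic zero and f : 𝔸² → 𝔸² a dominant polynomial map. Let v be a normalized semivaluation on R = K[z₁,z₂] centered at infinity and suppose: (1) there is a constant α with 0 < α ≤ 1 such that −deg φ ≤ v(φ) ≤ −α·deg φ for every nonconstant φ ∈ R, and (2) there is a real number d > 0 such that v(f*φ) = d·v(φ) for all φ ∈ R. Then dⁿ ≤ deg fⁿ ≤ α⁻¹·dⁿ for all n ≥ 1; in particular d_∞(f) = d. -/

import Mathlib

open Filter

/-- `deg fⁿ = max(deg (fⁿ)₁, deg (fⁿ)₂)` (total degrees), where the polynomial map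
`f : 𝔸² → 𝔸²` is encoded by its pullback `σ = f*`. -/
noncomputable def degSeq {K : Type*} [Field K]
    (σ : MvPolynomial (Fin 2) K →ₐ[K] MvPolynomial (Fin 2) K) (n : ℕ) : ℕ :=
  max (((⇑σ)^[n] (MvPolynomial.X 0)).totalDegree)
      (((⇑σ)^[n] (MvPolynomial.X 1)).totalDegree)

/-- A normalized semivaluation on `R = K[z₁,z₂]` centered at infinity. -/
def IsSemivalAtInfinity {K : Type*} [Field K] (v : MvPolynomial (Fin 2) K → EReal) : Prop :=
  (∀ φ, v φ ≠ ⊥) ∧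
  (∀ φ ψ, v (φ * ψ) = v φ + v ψ) ∧
  (∀ φ ψ, min (v φ) (v ψ) ≤ v (φ + ψ)) ∧
  (∀ c : K, c ≠ 0 → v (MvPolynomial.C c) = 0) ∧
  v 0 = ⊤ ∧
  min (v (MvPolynomial.X 0)) (v (MvPolynomial.X 1)) = -1

/-- **Degree bounds from an eigenvaluation at infinity.** If a normalized semivaluation
`v` centered at infinity satisfies `−deg φ ≤ v(φ) ≤ −α·deg φ` for all nonconstant `φ`
(for some `0 < α ≤ 1`) and `v ∘ f* = d·v` with `d > 0`, then
`dⁿ ≤ deg fⁿ ≤ α⁻¹·dⁿ` for all `n ≥ 1`; in particular `d_∞(f) = d`. -/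
theorem degree_bounds_from_eigenvaluation {K : Type*} [Field K] [IsAlgClosed K] [CharZero K]
    (σ : MvPolynomial (Fin 2) K →ₐ[K] MvPolynomial (Fin 2) K)
    (hdom : Function.Injective σ)
    (v : MvPolynomial (Fin 2) K → EReal) (hv : IsSemivalAtInfinity v)
    (α : ℝ) (hα0 : 0 < α) (hα1 : α ≤ 1)
    (hbound : ∀ φ : MvPolynomial (Fin 2) K, 0 < φ.totalDegree →
      ((-(φ.totalDegree : ℝ) : ℝ) : EReal) ≤ v φ ∧
        v φ ≤ ((-(α * (φ.totalDegree : ℝ)) : ℝ) : EReal))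
    (d : ℝ) (hd : 0 < d)
    (heigen : ∀ φ : MvPolynomial (Fin 2) K, v (σ φ) = (d : EReal) * v φ) :
    (∀ n : ℕ, 1 ≤ n → d ^ n ≤ (degSeq σ n : ℝ) ∧ (degSeq σ n : ℝ) ≤ α⁻¹ * d ^ n) ∧
    Tendsto (fun n : ℕ => (degSeq σ n : ℝ) ^ (n : ℝ)⁻¹) atTop (nhds d) := by
  obtain ⟨hbot, hmul, hadd, hC, h0, hmin⟩ := hv
  -- bounds on v(X i)
  have hX : ∀ i : Fin 2, ((-1 : ℝ) : EReal) ≤ v (MvPolynomial.X i) ∧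
      v (MvPolynomial.X i) ≤ ((-α : ℝ) : EReal) := by
    intro i
    have h := hbound (MvPolynomial.X i) (by simp [MvPolynomial.totalDegree_X])
    rw [MvPolynomial.totalDegree_X] at h
    simpa using h
  set b : Fin 2 → ℝ := fun i => (v (MvPolynomial.X i)).toReal with hbdef
  have hbe : ∀ i, (b i : EReal) = v (MvPolynomial.X i) := by
    intro i
    exact EReal.coe_toReal (((hX i).2.trans_lt (EReal.coe_lt_top _)).ne) (hbot _)
  have hble : ∀ i, -1 ≤ b i ∧ b i ≤ -α := by
    intro i
    constructor
    · have h := (hX i).1; rw [← hbe i] at h; exact_mod_cast h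
    · have h := (hX i).2; rw [← hbe i] at h; exact_mod_cast h
  have hminb : min (b 0) (b 1) = -1 := by
    have h : ((min (b 0) (b 1) : ℝ) : EReal) = ((-1 : ℝ) : EReal) := by
      rw [Monotone.map_min (fun x y : ℝ => EReal.coe_le_coe_iff.mpr), hbe, hbe, hmin]
      norm_num
    exact_mod_cast h
  -- iterates of constants
  have hCfix : ∀ (c : K) (n : ℕ), (⇑σ)^[n] (MvPolynomial.C c) = MvPolynomial.C c := by
    intro c n
    exact Function.iterate_fixed (MvPolynomial.algHom_C σ c) n
  -- nonconstancy of iterates of X i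
  have hdeg_pos : ∀ (n : ℕ) (i : Fin 2), 0 < ((⇑σ)^[n] (MvPolynomial.X i)).totalDegree := by
    intro n i
    by_contra h
    push_neg at h
    have h0' : ((⇑σ)^[n] (MvPolynomial.X i)).totalDegree = 0 := Nat.le_zero.mp h
    set p := (⇑σ)^[n] (MvPolynomial.X i) with hp
    have hpc : p = MvPolynomial.C (p.coeff 0) := by
      ext m
      rcases eq_or_ne m 0 with rfl | hm
      · simp
      · rw [MvPolynomial.coeff_C, if_neg (Ne.symm hm)]
        by_contra hc
        obtain ⟨x, hx⟩ := Finsupp.ne_iff.mp hm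
        exact hx (by
          simpa using (MvPolynomial.totalDegree_eq_zero_iff _ p).mp h0' m
            (MvPolynomial.mem_support_iff.mpr hc) x)
    have hinj : Function.Injective ((⇑σ)^[n]) := Function.Injective.iterate hdom n
    have hXc : MvPolynomial.X i = MvPolynomial.C (p.coeff 0) :=
      hinj (by rw [← hp] at *; rw [hCfix, ← hpc])
    have := congrArg MvPolynomial.totalDegree hXc
    simp [MvPolynomial.totalDegree_X] at this
  -- eigenvalue along iterates
  have hval : ∀ (n : ℕ) (i : Fin 2),
      v ((⇑σ)^[n] (MvPolynomial.X i)) = ((d ^ n * b i : ℝ) : EReal) := by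
    intro n i
    induction n with
    | zero => simp [hbe]
    | succ n ih =>
      rw [Function.iterate_succ_apply', heigen, ih, ← EReal.coe_mul]
      congr 1
      ring
  -- real bounds for iterates
  have hkey : ∀ (n : ℕ) (i : Fin 2),
      -((((⇑σ)^[n] (MvPolynomial.X i)).totalDegree : ℝ)) ≤ d ^ n * b i ∧
      d ^ n * b i ≤ -(α * (((⇑σ)^[n] (MvPolynomial.X i)).totalDegree : ℝ)) := by
    intro n i
    have h := hbound _ (hdeg_pos n i)
    rw [hval n i] at h
    exact ⟨by exact_mod_cast h.1, by exact_mod_cast h.2⟩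
  have hmain : ∀ n : ℕ, d ^ n ≤ (degSeq σ n : ℝ) ∧ (degSeq σ n : ℝ) ≤ α⁻¹ * d ^ n := by
    intro n
    have hdpow : (0:ℝ) < d ^ n := pow_pos hd n
    constructor
    · have hex : ∃ i : Fin 2, b i = -1 := by
        rcases le_total (b 0) (b 1) with h | h
        · exact ⟨0, by rw [← hminb, min_eq_left h]⟩
        · exact ⟨1, by rw [← hminb, min_eq_right h]⟩
      obtain ⟨i, hi⟩ := hex
      have h1 := (hkey n i).1
      rw [hi] at h1
      have h2 : d ^ n ≤ ((((⇑σ)^[n] (MvPolynomial.X i)).totalDegree : ℝ)) := by linarith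
      refine h2.trans ?_
      have h3 : (((⇑σ)^[n] (MvPolynomial.X i)).totalDegree) ≤ degSeq σ n := by
        unfold degSeq
        fin_cases i
        · exact le_max_left _ _
        · exact le_max_right _ _
      exact_mod_cast h3
    · unfold degSeq
      rw [Nat.cast_max]
      have key : ∀ i : Fin 2, ((((⇑σ)^[n] (MvPolynomial.X i)).totalDegree : ℝ)) ≤ α⁻¹ * d ^ n := by
        intro i
        have h2 := (hkey n i).2
        have hb1 := (hble i).1
        rw [inv_mul_eq_div, le_div_iff₀ hα0]
        nlinarith
      exact max_le (key 0) (key 1)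
  refine ⟨fun n _ => hmain n, ?_⟩
  have hlow : ∀ᶠ n in atTop, d ≤ (degSeq σ n : ℝ) ^ ((n:ℝ))⁻¹ := by
    filter_upwards [eventually_ge_atTop 1] with n hn
    have hne : ((n:ℝ)) ≠ 0 := Nat.cast_ne_zero.mpr (by omega)
    have h1 := (hmain n).1
    have h2 : (d ^ n) ^ ((n:ℝ))⁻¹ ≤ (degSeq σ n : ℝ) ^ ((n:ℝ))⁻¹ :=
      Real.rpow_le_rpow (by positivity) h1 (by positivity)
    calc d = (d ^ n) ^ ((n:ℝ))⁻¹ := by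
              rw [← Real.rpow_natCast d n, ← Real.rpow_mul hd.le, mul_inv_cancel₀ hne,
                Real.rpow_one]
      _ ≤ _ := h2
  have hupfun : Tendsto (fun n : ℕ => α⁻¹ ^ ((n:ℝ))⁻¹ * d) atTop (nhds d) := by
    have h1 : Tendsto (fun n : ℕ => α⁻¹ ^ ((n:ℝ))⁻¹) atTop (nhds 1) := by
      have hc : ContinuousAt (fun y : ℝ => α⁻¹ ^ y) 0 :=
        Real.continuousAt_const_rpow (by positivity)
      have := hc.tendsto.comp tendsto_inv_atTop_nhds_zero_nat
      simpa [Function.comp_def] using this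
    simpa using h1.mul_const d
  have hup : ∀ᶠ n in atTop, (degSeq σ n : ℝ) ^ ((n:ℝ))⁻¹ ≤ α⁻¹ ^ ((n:ℝ))⁻¹ * d := by
    filter_upwards [eventually_ge_atTop 1] with n hn
    have hne : ((n:ℝ)) ≠ 0 := Nat.cast_ne_zero.mpr (by omega)
    have h2 := (hmain n).2
    have h3 : ((degSeq σ n : ℝ)) ^ ((n:ℝ))⁻¹ ≤ (α⁻¹ * d ^ n) ^ ((n:ℝ))⁻¹ :=
      Real.rpow_le_rpow (by positivity) h2 (by positivity)
    refine h3.trans_eq ?_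
    rw [Real.mul_rpow (by positivity) (by positivity)]
    congr 1
    rw [← Real.rpow_natCast d n, ← Real.rpow_mul hd.le, mul_inv_cancel₀ hne, Real.rpow_one]
  exact tendsto_of_tendsto_of_tendsto_of_le_of_le' tendsto_const_nhds hupfun hlow hup
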